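/- If T is a power bounded operator on a Hilbert space H and L is a Banach limit, then there exists a unique positive operator A_{T,L} ∈ B(H) such that ⟨A_{T,L} x, y⟩ = L-lim_n ⟨T*^n T^n x, y⟩ for all x, y ∈ H. -/

import Mathlib

open ContinuousLinearMap Filter Topology BoundedContinuousFunction

/-- The shift `n ↦ n + 1` as a continuous map on `ℕ`. -/
def natShift : C(ℕ, ℕ) := ⟨fun n => n + 1, continuous_of_discreteTopology⟩

/-- A Banach limit: a norm-one positive shift-invariant continuous linear functional on
the space of bounded (complex) sequences which extends the ordinary limit functional. -/
structure IsBanachLimit (L : (ℕ →ᵇ ℂ) →L[ℂ] ℂ) : Prop where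
  norm_one : ‖L‖ = 1
  lim_eq : ∀ (f : ℕ →ᵇ ℂ) (c : ℂ), Tendsto f atTop (𝓝 c) → L f = c
  pos : ∀ f : ℕ →ᵇ ℂ, (∀ n, 0 ≤ (f n).re ∧ (f n).im = 0) → 0 ≤ (L f).re ∧ (L f).im = 0
  shift_inv : ∀ f : ℕ →ᵇ ℂ, L (f.compContinuous natShift) = L f

/-- `A` is the `L`-asymptotic limit of `T`: a positive operator whose sesquilinear form is
the `L`-limit of the forms of the self-adjoint iterates `T*^n T^n`. -/
def IsLAsymptoticLimit {H : Type*} [NormedAddCommGroup H] [InnerProductSpace ℂ H]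
    [CompleteSpace H] (L : (ℕ →ᵇ ℂ) →L[ℂ] ℂ) (T A : H →L[ℂ] H) : Prop :=
  A.IsPositive ∧ ∀ (x y : H) (f : ℕ →ᵇ ℂ),
    (∀ n : ℕ, f n = (inner ℂ ((adjoint (T ^ n) ∘L T ^ n) x) y : ℂ)) →
      (inner ℂ (A x) y : ℂ) = L f


section Aux
variable {H : Type*} [NormedAddCommGroup H] [InnerProductSpace ℂ H] [CompleteSpace H]

/-- the sequence n ↦ ⟨T*^n T^n x, y⟩ as a bounded function, given a power bound. -/
noncomputable def seqF (T : H →L[ℂ] H) (C : ℝ) (hC : ∀ n : ℕ, ‖T ^ n‖ ≤ C) (x y : H) :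
    ℕ →ᵇ ℂ :=
  BoundedContinuousFunction.ofNormedAddCommGroup
    (fun n => (inner ℂ ((adjoint (T ^ n) ∘L T ^ n) x) y : ℂ))
    continuous_of_discreteTopology (C * C * ‖x‖ * ‖y‖)
    (by
      intro n
      calc ‖(inner ℂ ((adjoint (T ^ n) ∘L T ^ n) x) y : ℂ)‖
          ≤ ‖(adjoint (T ^ n) ∘L T ^ n) x‖ * ‖y‖ := norm_inner_le_norm _ _
        _ ≤ ‖adjoint (T ^ n) ∘L T ^ n‖ * ‖x‖ * ‖y‖ := by
            gcongr; exact le_opNorm _ _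
        _ ≤ C * C * ‖x‖ * ‖y‖ := by
            have h1 : ‖adjoint (T ^ n) ∘L T ^ n‖ ≤ C * C := by
              calc ‖adjoint (T ^ n) ∘L T ^ n‖ ≤ ‖adjoint (T ^ n)‖ * ‖T ^ n‖ := opNorm_comp_le _ _
                _ = ‖T ^ n‖ * ‖T ^ n‖ := by rw [adjoint.norm_map]
                _ ≤ C * C := by
                    have := hC n
                    have h0 : (0:ℝ) ≤ ‖T ^ n‖ := norm_nonneg _
                    nlinarith
            exact mul_le_mul_of_nonneg_right
              (mul_le_mul_of_nonneg_right h1 (norm_nonneg x)) (norm_nonneg y))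

theorem seqF_apply (T : H →L[ℂ] H) (C : ℝ) (hC : ∀ n : ℕ, ‖T ^ n‖ ≤ C) (x y : H) (n : ℕ) :
    seqF T C hC x y n = (inner ℂ ((adjoint (T ^ n) ∘L T ^ n) x) y : ℂ) := rfl

variable (T : H →L[ℂ] H) (C : ℝ) (hC : ∀ n : ℕ, ‖T ^ n‖ ≤ C)

theorem seqF_norm_le (x y : H) : ‖seqF T C hC x y‖ ≤ C * C * ‖x‖ * ‖y‖ :=
  BoundedContinuousFunction.norm_ofNormedAddCommGroup_le _
    (mul_nonneg (mul_nonneg (mul_self_nonneg C) (norm_nonneg x)) (norm_nonneg y)) _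

theorem seqF_add_right (x y y' : H) :
    seqF T C hC x (y + y') = seqF T C hC x y + seqF T C hC x y' := by
  ext n; simp [seqF_apply, inner_add_right]

theorem seqF_smul_right (c : ℂ) (x y : H) :
    seqF T C hC x (c • y) = c • seqF T C hC x y := by
  ext n; simp [seqF_apply, inner_smul_right]

theorem seqF_add_left (x x' y : H) :
    seqF T C hC (x + x') y = seqF T C hC x y + seqF T C hC x' y := by
  ext n; simp [seqF_apply, inner_add_left]

theorem seqF_smul_left (c : ℂ) (x y : H) :
    seqF T C hC (c • x) y = (starRingEnd ℂ) c • seqF T C hC x y := by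
  ext n; simp [seqF_apply, inner_smul_left, mul_comm]

variable {L : (ℕ →ᵇ ℂ) →L[ℂ] ℂ}

/-- The bounded functional `y ↦ L (seqF T C hC x y)`. -/
noncomputable def phiAux (hL : IsBanachLimit L) (x : H) : H →L[ℂ] ℂ :=
  LinearMap.mkContinuous
    { toFun := fun y => L (seqF T C hC x y)
      map_add' := fun y y' => by
        show L (seqF T C hC x (y + y')) = L (seqF T C hC x y) + L (seqF T C hC x y')
        rw [seqF_add_right, map_add]
      map_smul' := fun c y => by
        show L (seqF T C hC x (c • y)) = (RingHom.id ℂ) c • L (seqF T C hC x y)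
        rw [seqF_smul_right, map_smul, RingHom.id_apply] }
    (C * C * ‖x‖)
    (fun y => by
      calc ‖L (seqF T C hC x y)‖ ≤ ‖L‖ * ‖seqF T C hC x y‖ := L.le_opNorm _
        _ = ‖seqF T C hC x y‖ := by rw [hL.norm_one, one_mul]
        _ ≤ C * C * ‖x‖ * ‖y‖ := seqF_norm_le T C hC x y)

theorem phiAux_apply (hL : IsBanachLimit L) (x y : H) :
    phiAux T C hC hL x y = L (seqF T C hC x y) := rfl

theorem phiAux_norm (hL : IsBanachLimit L) (x : H) :
    ‖phiAux T C hC hL x‖ ≤ C * C * ‖x‖ :=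
  LinearMap.mkContinuous_norm_le _ (mul_nonneg (mul_self_nonneg C) (norm_nonneg x)) _

theorem phiAux_add (hL : IsBanachLimit L) (x x' : H) :
    phiAux T C hC hL (x + x') = phiAux T C hC hL x + phiAux T C hC hL x' := by
  ext y
  simp only [phiAux_apply, ContinuousLinearMap.add_apply]
  rw [seqF_add_left, map_add]

theorem phiAux_smul (hL : IsBanachLimit L) (c : ℂ) (x : H) :
    phiAux T C hC hL (c • x) = (starRingEnd ℂ) c • phiAux T C hC hL x := by
  ext y
  simp only [phiAux_apply, ContinuousLinearMap.smul_apply, smul_eq_mul]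
  rw [seqF_smul_left, map_smul, smul_eq_mul]

/-- The asymptotic limit operator. -/
noncomputable def Aaux (hL : IsBanachLimit L) : H →L[ℂ] H :=
  LinearMap.mkContinuous
    { toFun := fun x => (InnerProductSpace.toDual ℂ H).symm (phiAux T C hC hL x)
      map_add' := fun x x' => by
        show (InnerProductSpace.toDual ℂ H).symm (phiAux T C hC hL (x + x')) = _
        rw [phiAux_add, map_add]
      map_smul' := fun c x => by
        show (InnerProductSpace.toDual ℂ H).symm (phiAux T C hC hL (c • x)) =
          (RingHom.id ℂ) c • (InnerProductSpace.toDual ℂ H).symm (phiAux T C hC hL x)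
        rw [phiAux_smul, LinearIsometryEquiv.map_smulₛₗ]
        simp }
    (C * C)
    (fun x => by
      show ‖(InnerProductSpace.toDual ℂ H).symm (phiAux T C hC hL x)‖ ≤ C * C * ‖x‖
      rw [LinearIsometryEquiv.norm_map]
      exact (phiAux_norm T C hC hL x).trans (le_of_eq rfl))

theorem Aaux_inner (hL : IsBanachLimit L) (x y : H) :
    (inner ℂ (Aaux T C hC hL x) y : ℂ) = L (seqF T C hC x y) := by
  show (inner ℂ ((InnerProductSpace.toDual ℂ H).symm (phiAux T C hC hL x)) y : ℂ) = _
  rw [InnerProductSpace.toDual_symm_apply]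
  rfl

end Aux

theorem banachLimit_real {L : (ℕ →ᵇ ℂ) →L[ℂ] ℂ} (hL : IsBanachLimit L)
    (f : ℕ →ᵇ ℂ) (hf : ∀ n, (f n).im = 0) : (L f).im = 0 := by
  have habs : ∀ n, |(f n).re| ≤ ‖f‖ := fun n =>
    (Complex.abs_re_le_norm (f n)).trans (f.norm_coe_le_norm n)
  have hg : ∀ n, 0 ≤ ((f + BoundedContinuousFunction.const ℕ ((‖f‖ : ℂ))) n).re ∧
      ((f + BoundedContinuousFunction.const ℕ ((‖f‖ : ℂ))) n).im = 0 := by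
    intro n
    have := abs_le.mp (habs n)
    constructor
    · simp only [BoundedContinuousFunction.add_apply, BoundedContinuousFunction.const_apply,
        Complex.add_re, Complex.ofReal_re]
      linarith [this.1]
    · simp [hf n]
  have h1 := (hL.pos _ hg).2
  have hconst : L (BoundedContinuousFunction.const ℕ ((‖f‖ : ℂ))) = (‖f‖ : ℂ) :=
    hL.lim_eq _ _ (by simpa using (tendsto_const_nhds : Tendsto (fun _ : ℕ => ((‖f‖ : ℂ))) atTop _))
  rw [map_add, hconst] at h1
  simpa using h1

theorem banachLimit_conj {L : (ℕ →ᵇ ℂ) →L[ℂ] ℂ} (hL : IsBanachLimit L)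
    (f g : ℕ →ᵇ ℂ) (hfg : ∀ n, g n = (starRingEnd ℂ) (f n)) :
    L g = (starRingEnd ℂ) (L f) := by
  set rf : ℕ →ᵇ ℂ := BoundedContinuousFunction.ofNormedAddCommGroup
    (fun n => (((f n).re : ℝ) : ℂ)) continuous_of_discreteTopology ‖f‖
    (fun n => by
      rw [Complex.norm_real]
      exact (Complex.abs_re_le_norm (f n)).trans (f.norm_coe_le_norm n)) with hrf
  set imf : ℕ →ᵇ ℂ := BoundedContinuousFunction.ofNormedAddCommGroup
    (fun n => (((f n).im : ℝ) : ℂ)) continuous_of_discreteTopology ‖f‖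
    (fun n => by
      rw [Complex.norm_real]
      exact (Complex.abs_im_le_norm (f n)).trans (f.norm_coe_le_norm n)) with himf
  have hrf_apply : ∀ n, rf n = (((f n).re : ℝ) : ℂ) := fun n => rfl
  have himf_apply : ∀ n, imf n = (((f n).im : ℝ) : ℂ) := fun n => rfl
  have hfd : f = rf + Complex.I • imf := by
    ext n
    simp only [BoundedContinuousFunction.add_apply, BoundedContinuousFunction.smul_apply,
      hrf_apply, himf_apply, smul_eq_mul]
    rw [mul_comm, Complex.re_add_im]
  have hgd : g = rf - Complex.I • imf := by
    ext n
    simp only [BoundedContinuousFunction.sub_apply, BoundedContinuousFunction.smul_apply,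
      hrf_apply, himf_apply, smul_eq_mul, hfg n]
    apply Complex.ext <;> simp
  have hra : (L rf).im = 0 := banachLimit_real hL rf (fun n => by simp [hrf_apply n])
  have hia : (L imf).im = 0 := banachLimit_real hL imf (fun n => by simp [himf_apply n])
  have h1 : (starRingEnd ℂ) (L rf) = L rf := Complex.conj_eq_iff_im.mpr hra
  have h2 : (starRingEnd ℂ) (L imf) = L imf := Complex.conj_eq_iff_im.mpr hia
  rw [hfd, hgd]
  simp only [map_sub, map_add, map_smul, smul_eq_mul, map_mul, Complex.conj_I, h1, h2]
  ring

/-- If `T` is power bounded and `L` is a Banach limit, then there exists a unique positive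
operator `A` with `⟨A x, y⟩ = L-lim ⟨T*^n T^n x, y⟩` for all `x, y`. -/
theorem stmt4 {H : Type*} [NormedAddCommGroup H] [InnerProductSpace ℂ H] [CompleteSpace H]
    (T : H →L[ℂ] H) (hT : ∃ C : ℝ, ∀ n : ℕ, ‖T ^ n‖ ≤ C)
    (L : (ℕ →ᵇ ℂ) →L[ℂ] ℂ) (hL : IsBanachLimit L) :
    ∃! A : H →L[ℂ] H, IsLAsymptoticLimit L T A := by
  obtain ⟨C₀, hC₀⟩ := hT
  have hC : ∀ n : ℕ, ‖T ^ n‖ ≤ max C₀ 0 := fun n => (hC₀ n).trans (le_max_left _ _)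
  set C : ℝ := max C₀ 0
  set A : H →L[ℂ] H := Aaux T C hC hL with hAdef
  have hA : ∀ x y : H, (inner ℂ (A x) y : ℂ) = L (seqF T C hC x y) := Aaux_inner T C hC hL
  have hA2 : ∀ (x y : H) (f : ℕ →ᵇ ℂ),
      (∀ n : ℕ, f n = (inner ℂ ((adjoint (T ^ n) ∘L T ^ n) x) y : ℂ)) →
      (inner ℂ (A x) y : ℂ) = L f := by
    intro x y f hf
    have hfs : f = seqF T C hC x y := by
      ext n
      rw [hf n, seqF_apply]
    rw [hfs, hA]
  have hseq_inner : ∀ (x y : H) (n : ℕ),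
      seqF T C hC x y n = (inner ℂ ((T ^ n) x) ((T ^ n) y) : ℂ) := by
    intro x y n
    rw [seqF_apply, ContinuousLinearMap.comp_apply]
    exact adjoint_inner_left _ _ _
  have hstar : ∀ (x y : H) (n : ℕ),
      seqF T C hC x y n = (starRingEnd ℂ) (seqF T C hC y x n) := by
    intro x y n
    rw [hseq_inner, hseq_inner, inner_conj_symm]
  refine ⟨A, ⟨⟨?_, ?_⟩, hA2⟩, ?_⟩
  · -- self-adjoint
    intro x y
    show (inner ℂ (A x) y : ℂ) = inner ℂ x (A y)
    rw [show (inner ℂ x (A y) : ℂ) = starRingEnd ℂ (inner ℂ (A y) x) from (inner_conj_symm _ _).symm,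
      hA, hA, banachLimit_conj hL _ _ (fun n => hstar x y n)]
  · -- nonneg
    intro x
    have h2 := hL.pos (seqF T C hC x x) (fun n => by
      rw [hseq_inner]
      constructor
      · rw [show ((inner ℂ ((T ^ n) x) ((T ^ n) x) : ℂ)) = ((‖(T ^ n) x‖ : ℂ))^2
          from inner_self_eq_norm_sq_to_K _]
        norm_cast
        exact sq_nonneg _
      · rw [show ((inner ℂ ((T ^ n) x) ((T ^ n) x) : ℂ)) = ((‖(T ^ n) x‖ : ℂ))^2
          from inner_self_eq_norm_sq_to_K _]
        norm_cast)
    show (0:ℝ) ≤ (inner ℂ (A x) x : ℂ).re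
    rw [hA]
    exact h2.1
  · -- uniqueness
    intro A' hA'
    apply ContinuousLinearMap.ext
    intro x
    apply ext_inner_right ℂ
    intro y
    rw [hA'.2 x y (seqF T C hC x y) (fun n => seqF_apply T C hC x y n), hA]
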